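/- If Q is an unbiased contractive compressor, i.e., E[‖Q(A) − A‖²] ≤ (1 − δ)‖A‖² and E[Q(A)] = A for all A, with δ ∈ (0,1], then the rescaled compressor Q′(A) = Q(A)/(2−δ) satisfies E[‖Q′(A) − A‖²] ≤ (1 − 1/(2−δ))‖A‖² for all A. -/

import Mathlib

open MeasureTheory

/-- If `Q` is an unbiased contractive compressor, i.e.
`E[‖Q(A) − A‖²] ≤ (1 − δ)‖A‖²` and `E[Q(A)] = A` for all `A`, with `δ ∈ (0,1]`,
then the rescaled compressor `Q′(A) = Q(A)/(2−δ)` satisfies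
`E[‖Q′(A) − A‖²] ≤ (1 − 1/(2−δ))‖A‖²` for all `A`. -/
theorem unbiased_to_biased_contractive_compressor
    {E : Type*} [NormedAddCommGroup E] [InnerProductSpace ℝ E] [CompleteSpace E]
    {Ω : Type*} [MeasurableSpace Ω] (P : Measure Ω) [IsProbabilityMeasure P]
    (Q : E → Ω → E) (δ : ℝ) (hδ0 : 0 < δ) (hδ1 : δ ≤ 1)
    (hint : ∀ A : E, Integrable (fun ω => Q A ω) P)
    (hint2 : ∀ A : E, Integrable (fun ω => ‖Q A ω - A‖ ^ 2) P)
    (hcontract : ∀ A : E, (∫ ω, ‖Q A ω - A‖ ^ 2 ∂P) ≤ (1 - δ) * ‖A‖ ^ 2)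
    (hunbiased : ∀ A : E, (∫ ω, Q A ω ∂P) = A) :
    ∀ A : E, (∫ ω, ‖(2 - δ)⁻¹ • Q A ω - A‖ ^ 2 ∂P) ≤ (1 - (2 - δ)⁻¹) * ‖A‖ ^ 2 := by
  intro A
  set c : ℝ := (2 - δ)⁻¹ with hc
  have h2δ : (0:ℝ) < 2 - δ := by linarith
  have hintQA : Integrable (fun ω => Q A ω - A) P := (hint A).sub (integrable_const A)
  have hinner : Integrable (fun ω => (inner ℝ A (Q A ω - A) : ℝ)) P :=
    hintQA.const_inner A
  -- integral of inner term is zero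
  have hinner0 : (∫ ω, (inner ℝ A (Q A ω - A) : ℝ) ∂P) = 0 := by
    rw [integral_inner hintQA]
    have : (∫ ω, Q A ω - A ∂P) = 0 := by
      rw [integral_sub (hint A) (integrable_const A), hunbiased A,
        integral_const, probReal_univ, one_smul, sub_self]
    rw [this, inner_zero_right]
  -- pointwise expansion
  have hpt : ∀ ω, ‖c • Q A ω - A‖ ^ 2
      = c ^ 2 * ‖Q A ω - A‖ ^ 2 + (2 * c * (c - 1)) * (inner ℝ A (Q A ω - A) : ℝ)
        + (c - 1) ^ 2 * ‖A‖ ^ 2 := by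
    intro ω
    have h1 : c • Q A ω - A = c • (Q A ω - A) + (c - 1) • A := by
      rw [smul_sub, sub_smul, one_smul]; abel
    rw [h1, @norm_add_sq_real]
    rw [norm_smul, norm_smul, real_inner_smul_left, real_inner_smul_right,
      real_inner_comm]
    simp [mul_pow, abs_of_nonneg, sq_abs]
    ring
  have hI : (∫ ω, ‖c • Q A ω - A‖ ^ 2 ∂P)
      = c ^ 2 * (∫ ω, ‖Q A ω - A‖ ^ 2 ∂P) + (c - 1) ^ 2 * ‖A‖ ^ 2 := by
    calc (∫ ω, ‖c • Q A ω - A‖ ^ 2 ∂P)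
        = ∫ ω, c ^ 2 * ‖Q A ω - A‖ ^ 2 + ((2 * c * (c - 1)) * (inner ℝ A (Q A ω - A) : ℝ)
            + (c - 1) ^ 2 * ‖A‖ ^ 2) ∂P := by
          congr 1; funext ω; rw [hpt ω]; ring
      _ = c ^ 2 * (∫ ω, ‖Q A ω - A‖ ^ 2 ∂P)
            + ((2 * c * (c - 1)) * (∫ ω, (inner ℝ A (Q A ω - A) : ℝ) ∂P)
              + (c - 1) ^ 2 * ‖A‖ ^ 2 * 1) := by
          have hi1 : Integrable (fun ω => c ^ 2 * ‖Q A ω - A‖ ^ 2) P :=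
            (hint2 A).const_mul _
          have hi3 : Integrable (fun ω => (2 * c * (c - 1)) * (inner ℝ A (Q A ω - A) : ℝ)) P :=
            hinner.const_mul _
          have hi2 : Integrable (fun ω => (2 * c * (c - 1)) * (inner ℝ A (Q A ω - A) : ℝ)
              + (c - 1) ^ 2 * ‖A‖ ^ 2) P := hi3.add (integrable_const _)
          rw [integral_add hi1 hi2, integral_add hi3 (integrable_const _),
            integral_const_mul, integral_const_mul, integral_const,
            probReal_univ, smul_eq_mul]
          ring
      _ = c ^ 2 * (∫ ω, ‖Q A ω - A‖ ^ 2 ∂P) + (c - 1) ^ 2 * ‖A‖ ^ 2 := by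
          rw [hinner0]; ring
  have hkey : c ^ 2 * (∫ ω, ‖Q A ω - A‖ ^ 2 ∂P) ≤ c ^ 2 * ((1 - δ) * ‖A‖ ^ 2) :=
    mul_le_mul_of_nonneg_left (hcontract A) (sq_nonneg c)
  have hfin : c ^ 2 * ((1 - δ) * ‖A‖ ^ 2) + (c - 1) ^ 2 * ‖A‖ ^ 2
      = (1 - c) * ‖A‖ ^ 2 := by
    have hne : (2 - δ) ≠ 0 := ne_of_gt h2δ
    rw [hc]
    field_simp
    ring
  rw [hI]
  linarith
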